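/- Let α > 1 and suppose |R(y)| ≤ C|y|_p^M for all |y|_p ≤ 1, where M > 0. Then for 0 < |x|_p ≤ 1, |∫_{|y|_p ≤ |x|_p} (|x − y|_p^(α−1) − |y|_p^(α−1)) R(y) dy| ≤ C' |x|_p^(α+M) for some constant C' depending only on p, α, M. -/

import Mathlib

open MeasureTheory Real Filter

noncomputable instance padicMeasurableSpace (p : ℕ) [Fact p.Prime] : MeasurableSpace ℚ_[p] := borel _
instance padicBorelSpace (p : ℕ) [Fact p.Prime] : BorelSpace ℚ_[p] := ⟨rfl⟩

/-- The Haar measure on `ℚ_[p]` normalized so that the unit ball has measure 1. -/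
noncomputable def padicHaar (p : ℕ) [Fact p.Prime] : Measure ℚ_[p] :=
  Measure.addHaarMeasure
    ⟨⟨Metric.closedBall 0 1, isCompact_closedBall 0 1⟩,
      ⟨0, Metric.ball_subset_interior_closedBall (Metric.mem_ball_self one_pos)⟩⟩

open scoped ENNReal

namespace PadicRemainderAux

variable {p : ℕ} [Fact p.Prime]

def padicK (p : ℕ) [Fact p.Prime] : TopologicalSpace.PositiveCompacts ℚ_[p] :=
  ⟨⟨Metric.closedBall 0 1, isCompact_closedBall 0 1⟩,
    ⟨0, Metric.ball_subset_interior_closedBall (Metric.mem_ball_self one_pos)⟩⟩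

instance : Measure.IsAddHaarMeasure (padicHaar p) :=
  Measure.isAddHaarMeasure_addHaarMeasure (padicK p)

lemma padicHaar_ball_one : padicHaar p (Metric.closedBall 0 1) = 1 :=
  Measure.addHaarMeasure_self (K₀ := padicK p)

lemma padicHaar_map (x : ℚ_[p]) (hx : x ≠ 0) (s : Set ℚ_[p]) (hs : MeasurableSet s) :
    padicHaar p ((x * ·) ⁻¹' s)
      = padicHaar p ((x * ·) ⁻¹' Metric.closedBall 0 1) * padicHaar p s := by
  have hinst : Measure.IsAddHaarMeasure ((padicHaar p).map (x * ·)) := by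
    have h := AddEquiv.isAddHaarMeasure_map (padicHaar p)
      (AddAut.mulLeft (Units.mk0 x hx) : ℚ_[p] ≃+ ℚ_[p])
      (continuous_mul_left x) (continuous_mul_left x⁻¹)
    convert h using 2
    ext y; rfl
  have huniq := Measure.addHaarMeasure_unique ((padicHaar p).map (x * ·)) (padicK p)
  have h1 : (padicHaar p).map (x * ·) s
      = ((padicHaar p).map (x * ·)) (padicK p) * padicHaar p s := by
    conv_lhs => rw [huniq]
    rw [Measure.smul_apply, smul_eq_mul]
    rfl
  have h2 : ((padicHaar p).map (x * ·)) (padicK p)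
      = padicHaar p ((x * ·) ⁻¹' Metric.closedBall 0 1) :=
    Measure.map_apply (measurable_const_mul x) measurableSet_closedBall
  rw [Measure.map_apply (measurable_const_mul x) hs] at h1
  rw [h1, h2]

lemma preim_ball (x : ℚ_[p]) (hx : x ≠ 0) (r : ℝ) :
    (x * ·) ⁻¹' Metric.closedBall (0:ℚ_[p]) r = Metric.closedBall 0 (r / ‖x‖) := by
  ext y
  simp only [Set.mem_preimage, Metric.mem_closedBall, dist_zero_right, norm_mul]
  rw [le_div_iff₀ (norm_pos_iff.mpr hx), mul_comm]

lemma cover (y : ℚ_[p]) (hy : ‖y‖ ≤ 1) :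
    ∃ k ∈ Finset.range p, ‖y - (k:ℚ_[p])‖ ≤ (p:ℝ)⁻¹ := by
  set z : ℤ_[p] := ⟨y, hy⟩
  refine ⟨z.appr 1, Finset.mem_range.mpr (by simpa using z.appr_lt 1), ?_⟩
  have h := PadicInt.appr_spec 1 z
  rw [Ideal.mem_span_singleton] at h
  obtain ⟨c, hc⟩ := h
  have : ‖z - (z.appr 1 : ℤ_[p])‖ ≤ (p:ℝ)⁻¹ := by
    rw [hc, pow_one, norm_mul, PadicInt.norm_p]
    calc (p:ℝ)⁻¹ * ‖c‖ ≤ (p:ℝ)⁻¹ * 1 := by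
          gcongr
          exact c.norm_le_one
    _ = (p:ℝ)⁻¹ := mul_one _
  have he : ((z - (z.appr 1 : ℤ_[p]) : ℤ_[p]) : ℚ_[p]) = y - (z.appr 1 : ℚ_[p]) := by
    push_cast
    rfl
  rwa [PadicInt.norm_def, he] at this

lemma sep (j k : ℕ) (hj : j < p) (hk : k < p) (hjk : j ≠ k) :
    (1:ℝ) ≤ ‖(j:ℚ_[p]) - (k:ℚ_[p])‖ := by
  by_contra h
  push_neg at h
  have hdvd : (p:ℤ) ∣ ((j:ℤ) - k) :=
    (Padic.norm_intCast_lt_one_iff (k := (j:ℤ) - k)).mp (by push_cast at h ⊢; exact h)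
  have hne : ((j:ℤ) - k) ≠ 0 := by omega
  have h2 := Int.le_of_dvd (abs_pos.mpr hne) ((dvd_abs _ _).mpr hdvd)
  have h3 : |(j:ℤ) - k| < p := by rw [abs_lt]; omega
  omega

lemma padicHaar_small : padicHaar p (Metric.closedBall 0 (p:ℝ)⁻¹) = (p:ℝ≥0∞)⁻¹ := by
  have hp1 : 1 < p := (Fact.out : p.Prime).one_lt
  have hcover : Metric.closedBall (0:ℚ_[p]) 1
      = ⋃ k ∈ Finset.range p, Metric.closedBall ((k:ℚ_[p])) (p:ℝ)⁻¹ := by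
    ext y
    simp only [Metric.mem_closedBall, dist_zero_right, Set.mem_iUnion, Finset.mem_range,
      dist_eq_norm_sub, sub_zero]
    constructor
    · intro hy
      obtain ⟨k, hk, hk2⟩ := cover y hy
      exact ⟨k, Finset.mem_range.mp hk, hk2⟩
    · rintro ⟨k, hk, hk2⟩
      have h1 : ‖(k:ℚ_[p])‖ ≤ 1 := by
        have := Padic.norm_int_le_one (p := p) k
        push_cast at this
        exact this
      have : y = (y - k) + k := by ring
      rw [this]
      refine le_trans (Padic.nonarchimedean _ _) (max_le (le_trans hk2 ?_) h1)
      rw [inv_le_one_iff₀]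
      right
      exact_mod_cast hp1.le
  have hdisj : (↑(Finset.range p) : Set ℕ).PairwiseDisjoint
      (fun k => Metric.closedBall ((k:ℚ_[p])) (p:ℝ)⁻¹) := by
    intro j hj k hk hjk
    simp only [Finset.coe_range, Set.mem_Iio] at hj hk
    refine Set.disjoint_left.mpr fun y hyj hyk => ?_
    simp only [Metric.mem_closedBall, dist_eq_norm_sub] at hyj hyk
    have h1 := sep j k hj hk hjk
    have : (j:ℚ_[p]) - k = (y - k) - (y - j) := by ring
    have h2 : ‖(j:ℚ_[p]) - k‖ ≤ (p:ℝ)⁻¹ := by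
      rw [this, sub_eq_add_neg]
      refine le_trans (Padic.nonarchimedean _ _) (max_le hyk ?_)
      rw [norm_neg]; exact hyj
    have : (p:ℝ)⁻¹ < 1 := by
      rw [inv_lt_one_iff₀]; right; exact_mod_cast hp1
    linarith
  have htrans : ∀ k : ℕ, padicHaar p (Metric.closedBall ((k:ℚ_[p])) (p:ℝ)⁻¹)
      = padicHaar p (Metric.closedBall 0 (p:ℝ)⁻¹) := by
    intro k
    have : Metric.closedBall ((k:ℚ_[p])) (p:ℝ)⁻¹
        = (fun y => (-(k:ℚ_[p])) + y) ⁻¹' Metric.closedBall 0 (p:ℝ)⁻¹ := by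
      ext y
      simp [Metric.mem_closedBall, dist_eq_norm_sub, neg_add_eq_sub]
    rw [this, measure_preimage_add]
  have hsum : padicHaar p (Metric.closedBall 0 1)
      = ∑ _k ∈ Finset.range p, padicHaar p (Metric.closedBall 0 (p:ℝ)⁻¹) := by
    rw [hcover, measure_biUnion_finset hdisj (fun k _ => measurableSet_closedBall)]
    exact Finset.sum_congr rfl fun k _ => htrans k
  rw [padicHaar_ball_one, Finset.sum_const, Finset.card_range, nsmul_eq_mul] at hsum
  have hp0 : (p:ℝ≥0∞) ≠ 0 := by exact_mod_cast (Nat.zero_lt_of_lt hp1).ne'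
  exact ENNReal.eq_inv_of_mul_eq_one_left (by rw [mul_comm]; exact hsum.symm)

lemma padicHaar_ball_pow (n : ℕ) :
    padicHaar p (Metric.closedBall 0 ((p:ℝ)^(-(n:ℤ)))) = (p:ℝ≥0∞)^(-(n:ℤ)) := by
  induction n with
  | zero => simpa using padicHaar_ball_one
  | succ n ih =>
    have hp1 : 1 < p := (Fact.out : p.Prime).one_lt
    have hp0 : (0:ℝ) < p := by exact_mod_cast Nat.zero_lt_of_lt hp1
    have hx : ((p:ℚ_[p]))⁻¹ ≠ 0 := by
      simp only [ne_eq, inv_eq_zero, Nat.cast_eq_zero]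
      omega
    have hnorm : ‖((p:ℚ_[p]))⁻¹‖ = (p:ℝ) := by
      rw [norm_inv, Padic.norm_p, inv_inv]
    have key := padicHaar_map ((p:ℚ_[p]))⁻¹ hx (Metric.closedBall 0 ((p:ℝ)^(-(n:ℤ))))
      measurableSet_closedBall
    rw [preim_ball _ hx, preim_ball _ hx, hnorm] at key
    have e1 : (p:ℝ)^(-(n:ℤ)) / p = (p:ℝ)^(-((n+1:ℕ):ℤ)) := by
      rw [div_eq_mul_inv, ← zpow_neg_one (p:ℝ), ← zpow_add₀ hp0.ne']
      congr 1
      push_cast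
      ring
    have e2 : (1:ℝ) / p = (p:ℝ)⁻¹ := one_div (p:ℝ)
    rw [e1, e2] at key
    rw [key, padicHaar_small, ih]
    rw [← zpow_neg_one, ← ENNReal.zpow_add
      (by exact_mod_cast (Nat.zero_lt_of_lt hp1).ne' : (p:ℝ≥0∞) ≠ 0)
      (by exact ENNReal.natCast_ne_top p)]
    congr 1
    push_cast
    ring

end PadicRemainderAux

theorem remainder_bound (p : ℕ) [Fact p.Prime] (α M C : ℝ) (hα : 1 < α) (hM : 0 < M)
    (R : ℚ_[p] → ℝ) (hR : ∀ y : ℚ_[p], ‖y‖ ≤ 1 → |R y| ≤ C * ‖y‖ ^ M) :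
    ∃ C' : ℝ, ∀ x : ℚ_[p], 0 < ‖x‖ → ‖x‖ ≤ 1 →
      |∫ y in {y : ℚ_[p] | ‖y‖ ≤ ‖x‖},
          (‖x - y‖ ^ (α - 1) - ‖y‖ ^ (α - 1)) * R y ∂(padicHaar p)|
        ≤ C' * ‖x‖ ^ (α + M) := by
  have hp1 : 1 < p := (Fact.out : p.Prime).one_lt
  have hC0 : 0 ≤ C := by
    have h := hR 1 (by norm_num)
    have h2 : ‖(1:ℚ_[p])‖ = 1 := by norm_num
    rw [h2, Real.one_rpow, mul_one] at h
    exact (abs_nonneg _).trans h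
  refine ⟨C, fun x hx hx1 => ?_⟩
  have hxne : x ≠ 0 := norm_pos_iff.mp hx
  have hset : {y : ℚ_[p] | ‖y‖ ≤ ‖x‖} = Metric.closedBall 0 ‖x‖ := by
    ext y; simp [Metric.mem_closedBall, dist_zero_right]
  obtain ⟨n, hn⟩ : ∃ n : ℕ, ‖x‖ = (p:ℝ)^(-(n:ℤ)) := by
    have hv := Padic.norm_eq_zpow_neg_valuation hxne
    have hval : 0 ≤ x.valuation := by
      by_contra hneg
      push_neg at hneg
      have h1 : (1:ℝ) < (p:ℝ)^(-x.valuation) :=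
        one_lt_zpow₀ (by exact_mod_cast hp1) (by omega)
      rw [← hv] at h1; linarith
    exact ⟨x.valuation.toNat, by rw [hv]; congr 1; omega⟩
  have h0 : (p:ℝ≥0∞) ≠ 0 := by exact_mod_cast (by omega : p ≠ 0)
  have hmeasval : padicHaar p {y : ℚ_[p] | ‖y‖ ≤ ‖x‖} = (p:ℝ≥0∞)^(-(n:ℤ)) := by
    rw [hset, hn]; exact PadicRemainderAux.padicHaar_ball_pow n
  have hfin : padicHaar p {y : ℚ_[p] | ‖y‖ ≤ ‖x‖} < ⊤ := by
    rw [hmeasval]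
    refine lt_top_iff_ne_top.mpr ?_
    rw [ENNReal.zpow_neg, zpow_natCast]
    simp only [ne_eq, ENNReal.inv_eq_top, pow_eq_zero_iff', Nat.cast_eq_zero]
    omega
  have htoReal : (padicHaar p {y : ℚ_[p] | ‖y‖ ≤ ‖x‖}).toReal = ‖x‖ := by
    rw [hmeasval, hn, ENNReal.zpow_neg, zpow_natCast, zpow_neg,
      zpow_natCast, ENNReal.toReal_inv, ENNReal.toReal_pow]
    norm_num
  have hsm : MeasurableSet {y : ℚ_[p] | ‖y‖ ≤ ‖x‖} := by
    rw [hset]; exact measurableSet_closedBall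
  have hbound : ∀ y ∈ {y : ℚ_[p] | ‖y‖ ≤ ‖x‖},
      ‖(‖x - y‖ ^ (α - 1) - ‖y‖ ^ (α - 1)) * R y‖ ≤ C * ‖x‖ ^ (α - 1 + M) := by
    intro y hy
    have hy' : ‖y‖ ≤ ‖x‖ := hy
    have h1 : ‖x - y‖ ≤ ‖x‖ := by
      rw [sub_eq_add_neg]
      exact le_trans (Padic.nonarchimedean _ _) (max_le le_rfl (by rwa [norm_neg]))
    have ha : ‖x - y‖ ^ (α - 1) ≤ ‖x‖ ^ (α - 1) :=
      Real.rpow_le_rpow (norm_nonneg _) h1 (by linarith)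
    have hb : ‖y‖ ^ (α - 1) ≤ ‖x‖ ^ (α - 1) :=
      Real.rpow_le_rpow (norm_nonneg _) hy' (by linarith)
    have ha0 : 0 ≤ ‖x - y‖ ^ (α - 1) := Real.rpow_nonneg (norm_nonneg _) _
    have hb0 : 0 ≤ ‖y‖ ^ (α - 1) := Real.rpow_nonneg (norm_nonneg _) _
    have habs : |‖x - y‖ ^ (α - 1) - ‖y‖ ^ (α - 1)| ≤ ‖x‖ ^ (α - 1) :=
      abs_le.mpr ⟨by linarith, by linarith⟩
    have hRy : |R y| ≤ C * ‖x‖ ^ M := by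
      refine (hR y (hy'.trans hx1)).trans ?_
      exact mul_le_mul_of_nonneg_left (Real.rpow_le_rpow (norm_nonneg _) hy' hM.le) hC0
    rw [Real.norm_eq_abs, abs_mul]
    calc |‖x - y‖ ^ (α - 1) - ‖y‖ ^ (α - 1)| * |R y|
        ≤ ‖x‖ ^ (α - 1) * (C * ‖x‖ ^ M) :=
          mul_le_mul habs hRy (abs_nonneg _) (Real.rpow_nonneg (norm_nonneg _) _)
      _ = C * ‖x‖ ^ (α - 1 + M) := by rw [Real.rpow_add hx]; ring
  have key := norm_setIntegral_le_of_norm_le_const (μ := padicHaar p) hfin hbound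
  rw [Real.norm_eq_abs, measureReal_def, htoReal] at key
  refine key.trans (le_of_eq ?_)
  rw [show α + M = α - 1 + M + 1 by ring, Real.rpow_add hx (α - 1 + M) 1, Real.rpow_one]
  ring
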